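/- Let A be a commutative ring, I ⊆ A an ideal, N a finitely generated projective A-module, M a finitely generated A-module, and q : A^d → M an A-linear map such that the induced map q̄ : (A/I)^d → M/IM is surjective. If M is generated by d elements, then there exists an A-linear map ℓ : A^d → M with image contained in IM such that the combined map (q, ℓ) : A^{2d} → M is surjective. -/

import Mathlib

/-- If `M` is a finitely generated `A`-module generated by `d` elements,
`N` is a finitely generated projective `A`-module, and `q : A^d → M` is a map which
is surjective modulo `IM`, then there is `ℓ : A^d → M` with image contained in `IM`
such that `(q, ℓ) : A^{2d} → M` is surjective. -/
theorem stmt_3 {A : Type*} [CommRing A] (I : Ideal A)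
    {N : Type*} [AddCommGroup N] [Module A N]
    [Module.Finite A N] [Module.Projective A N]
    {M : Type*} [AddCommGroup M] [Module A M] [Module.Finite A M]
    (d : ℕ) (q : (Fin d → A) →ₗ[A] M)
    (hq : ∀ m : M, ∃ x : Fin d → A, m - q x ∈ (I • ⊤ : Submodule A M))
    (g : Fin d → M) (hg : Submodule.span A (Set.range g) = ⊤) :
    ∃ ℓ : (Fin d → A) →ₗ[A] M,
      LinearMap.range ℓ ≤ (I • ⊤ : Submodule A M) ∧
      Function.Surjective (LinearMap.coprod q ℓ) := by
  choose x hx using fun i => hq (g i)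
  set v : Fin d → M := fun i => g i - q (x i) with hv
  refine ⟨Fintype.linearCombination A v, ?_, ?_⟩
  · rintro y ⟨c, rfl⟩
    simp only [Fintype.linearCombination_apply]
    exact Submodule.sum_mem _ fun i _ => Submodule.smul_mem _ _ (hx i)
  · rw [← LinearMap.range_eq_top, ← top_le_iff, ← hg, Submodule.span_le]
    rintro m ⟨i, rfl⟩
    refine ⟨(x i, Pi.single i 1), ?_⟩
    simp [Fintype.linearCombination_apply, Pi.single_apply, hv]
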